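/- Let p ≥ 5 be a prime and let s, t : (ℤ/pℤ) ∖ {0} → ℂ be arbitrary. In the polynomial ring ℂ[r_a : a ∈ ℤ/pℤ] let I_{s,t} be the ideal generated by the quadrics R_{a,b,c,d} = r_a r_b − r_c r_d − r_0 r_{a+b}(s_a + s_b − s_c − s_d) for all nonzero a, b, c, d with a + b = c + d ≠ 0, together with R_{a,b,−a,−b} = r_a r_{−a} − r_b r_{−b} − r_0² (−s_a² + 2 t_a + s_b² − 2 t_b) for all nonzero a, b. Then for every n > 0 the ℂ-dimension of the degree-n graded component of ℂ[r_a : a ∈ ℤ/pℤ]/I_{s,t} (i.e., the image of the space of homogeneous polynomials of total degree n in the quotient) is at most np, and the degree-0 component has dimension 1. -/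

import Mathlib

open MvPolynomial

/-- The ideal `I_{s,t}` of ℂ[r_a : a ∈ ℤ/pℤ] generated by the quadrics
`R_{a,b,c,d} = r_a r_b − r_c r_d − r_0 r_{a+b}(s_a + s_b − s_c − s_d)` for nonzero
a, b, c, d with a + b = c + d ≠ 0, and
`R_{a,b,−a,−b} = r_a r_{−a} − r_b r_{−b} − r_0²(−s_a² + 2t_a + s_b² − 2t_b)` for nonzero
a, b. -/
noncomputable def relIdeal (p : ℕ) (s t : ZMod p → ℂ) :
    Ideal (MvPolynomial (ZMod p) ℂ) :=
  Ideal.span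
    ({q | ∃ a b c d : ZMod p, a ≠ 0 ∧ b ≠ 0 ∧ c ≠ 0 ∧ d ≠ 0 ∧ a + b = c + d ∧ a + b ≠ 0 ∧
        q = X a * X b - X c * X d - X 0 * X (a + b) * C (s a + s b - s c - s d)} ∪
     {q | ∃ a b : ZMod p, a ≠ 0 ∧ b ≠ 0 ∧
        q = X a * X (-a) - X b * X (-b) -
          X 0 ^ 2 * C (-(s a) ^ 2 + 2 * t a + (s b) ^ 2 - 2 * t b)})

/-- The degree-n graded component of ℂ[r_a : a ∈ ℤ/pℤ]/I_{s,t}: the image in the quotient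
of the space of homogeneous polynomials of total degree n. -/
noncomputable def gradedPiece (p : ℕ) (s t : ZMod p → ℂ) (n : ℕ) :
    Submodule ℂ (MvPolynomial (ZMod p) ℂ ⧸ relIdeal p s t) :=
  (MvPolynomial.homogeneousSubmodule (ZMod p) ℂ n).map
    (Ideal.Quotient.mkₐ ℂ (relIdeal p s t)).toLinearMap

namespace St11

variable {p : ℕ} (s t : ZMod p → ℂ)

/-- product of variables indexed by a multiset -/
noncomputable def P (m : Multiset (ZMod p)) : MvPolynomial (ZMod p) ℂ :=
  (m.map X).prod

lemma P_cons (a : ZMod p) (m : Multiset (ZMod p)) : P (a ::ₘ m) = X a * P m := by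
  simp [P]

lemma P_add (m n : Multiset (ZMod p)) : P (m + n) = P m * P n := by
  simp [P]

noncomputable def mkq : MvPolynomial (ZMod p) ℂ →ₐ[ℂ] (MvPolynomial (ZMod p) ℂ ⧸ relIdeal p s t) :=
  Ideal.Quotient.mkₐ ℂ (relIdeal p s t)

lemma mkq_C_mul (c : ℂ) (q : MvPolynomial (ZMod p) ℂ) :
    mkq s t (C c * q) = c • mkq s t q := by
  rw [map_mul, ← algebraMap_eq, AlgHom.commutes, ← Algebra.smul_def]

/-- The key rewriting step coming from the relations. -/
lemma step (a b c d : ZMod p) (ha : a ≠ 0) (hb : b ≠ 0) (hc : c ≠ 0) (hd : d ≠ 0)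
    (hsum : a + b = c + d) (m : Multiset (ZMod p)) :
    ∃ lam : ℂ, mkq s t (P (a ::ₘ b ::ₘ m)) =
      mkq s t (P (c ::ₘ d ::ₘ m)) + lam • mkq s t (P (0 ::ₘ (a + b) ::ₘ m)) := by
  have key : ∀ lam : ℂ,
      (X a * X b - X c * X d - X 0 * X (a + b) * C lam) * P m ∈ relIdeal p s t →
      mkq s t (P (a ::ₘ b ::ₘ m)) =
        mkq s t (P (c ::ₘ d ::ₘ m)) + lam • mkq s t (P (0 ::ₘ (a + b) ::ₘ m)) := by
    intro lam hmem
    rw [P_cons, P_cons, P_cons, P_cons, P_cons, P_cons, ← mkq_C_mul]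
    rw [mkq, Ideal.Quotient.mkₐ_eq_mk, ← map_add, Ideal.Quotient.eq]
    have h2 : X a * (X b * P m) - (X c * (X d * P m) + C lam * (X 0 * (X (a + b) * P m)))
        = (X a * X b - X c * X d - X 0 * X (a + b) * C lam) * P m := by ring
    rw [h2]; exact hmem
  by_cases h0 : a + b = 0
  · have hb' : b = -a := by linear_combination h0
    have hd' : d = -c := by linear_combination hsum.symm.trans h0
    refine ⟨-(s a) ^ 2 + 2 * t a + (s c) ^ 2 - 2 * t c, key _ ?_⟩
    apply Ideal.mul_mem_right
    apply Ideal.subset_span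
    refine Or.inr ⟨a, c, ha, hc, ?_⟩
    subst hb' hd'
    rw [h0]
    ring
  · refine ⟨s a + s b - s c - s d, key _ ?_⟩
    apply Ideal.mul_mem_right
    apply Ideal.subset_span
    exact Or.inl ⟨a, b, c, d, ha, hb, hc, hd, hsum, h0, rfl⟩

end St11

namespace St11X
open St11 Multiset

variable {p : ℕ} (s t : ZMod p → ℂ)

/-- count of nonzero entries -/
noncomputable def nz (m : Multiset (ZMod p)) : ℕ := Multiset.card (m.filter (· ≠ 0))

/-- Span of classes of degree-N monomials with fewer than k nonzero variables. -/
noncomputable def Low (N k : ℕ) :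
    Submodule ℂ (MvPolynomial (ZMod p) ℂ ⧸ relIdeal p s t) :=
  Submodule.span ℂ
    {x | ∃ m : Multiset (ZMod p), Multiset.card m = N ∧ nz m < k ∧ x = mkq s t (P m)}

lemma natCast_ne (hp5 : 5 ≤ p) (n : ℕ) (h1 : 0 < n) (h2 : n < p) : (n : ZMod p) ≠ 0 := by
  haveI : NeZero p := ⟨by omega⟩
  rw [Ne, ZMod.natCast_eq_zero_iff]
  intro hd
  have := Nat.le_of_dvd h1 hd
  omega

lemma nz_replicate_add (z : ℕ) (w : Multiset (ZMod p)) :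
    nz (Multiset.replicate z 0 + w) = nz w := by
  rw [nz, Multiset.filter_add, Multiset.filter_eq_nil.2
    (fun a ha => by simp [Multiset.eq_of_mem_replicate ha]), nz, zero_add]

lemma nz_zero_cons (w : Multiset (ZMod p)) : nz ((0 : ZMod p) ::ₘ w) = nz w := by
  rw [nz, Multiset.filter_cons_of_neg _ (by simp), nz]

lemma nz_le_card (w : Multiset (ZMod p)) : nz w ≤ Multiset.card w :=
  Multiset.card_le_card (Multiset.filter_le _ _)

lemma nz_cons_le (a : ZMod p) (w : Multiset (ZMod p)) : nz (a ::ₘ w) ≤ nz w + 1 := by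
  rw [nz, Multiset.filter_cons]
  split <;> simp [nz, add_comm]

/-- One rewriting move, with zero-padding, lands the difference in `Low`. -/
lemma move1 (a b a' b' : ZMod p) (ha : a ≠ 0) (hb : b ≠ 0) (ha' : a' ≠ 0) (hb' : b' ≠ 0)
    (hsum : a + b = a' + b') (z k : ℕ) (w : Multiset (ZMod p)) (hw : Multiset.card w + 2 = k)
    (hwnz : nz w + 2 ≤ k) :
    mkq s t (P (Multiset.replicate z 0 + (a ::ₘ b ::ₘ w))) -
      mkq s t (P (Multiset.replicate z 0 + (a' ::ₘ b' ::ₘ w))) ∈ Low s t (z + k) k := by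
  have pad : ∀ x y : ZMod p, Multiset.replicate z 0 + (x ::ₘ y ::ₘ w)
      = x ::ₘ y ::ₘ (Multiset.replicate z 0 + w) := by
    intro x y; rw [Multiset.add_cons, Multiset.add_cons]
  rw [pad, pad]
  obtain ⟨lam, hlam⟩ := step s t a b a' b' ha hb ha' hb' hsum (Multiset.replicate z 0 + w)
  rw [hlam]
  have hgen : mkq s t (P ((0 : ZMod p) ::ₘ (a + b) ::ₘ (Multiset.replicate z 0 + w)))
      ∈ Low s t (z + k) k := by
    apply Submodule.subset_span
    refine ⟨_, ?_, ?_, rfl⟩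
    · simp [Multiset.card_replicate]; omega
    · rw [nz_zero_cons]
      have h1 := nz_cons_le (a + b) (Multiset.replicate z 0 + w)
      rw [nz_replicate_add] at h1
      omega
  have heq : mkq s t (P (a' ::ₘ b' ::ₘ (Multiset.replicate z 0 + w))) +
      lam • mkq s t (P ((0:ZMod p) ::ₘ (a + b) ::ₘ (Multiset.replicate z 0 + w))) -
      mkq s t (P (a' ::ₘ b' ::ₘ (Multiset.replicate z 0 + w))) =
      lam • mkq s t (P ((0:ZMod p) ::ₘ (a + b) ::ₘ (Multiset.replicate z 0 + w))) := by
    abel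
  rw [heq]
  exact Submodule.smul_mem _ _ hgen

lemma exists_two (m : Multiset (ZMod p)) (h : 2 ≤ Multiset.card m) :
    ∃ a b w, m = a ::ₘ b ::ₘ w := by
  obtain ⟨a, ha⟩ := Multiset.exists_mem_of_ne_zero (s := m)
    (fun h0 => by rw [h0] at h; simp at h)
  obtain ⟨u, rfl⟩ := Multiset.exists_cons_of_mem ha
  simp only [Multiset.card_cons] at h
  obtain ⟨b, hb⟩ := Multiset.exists_mem_of_ne_zero (s := u)
    (fun h0 => by rw [h0] at h; simp at h)
  obtain ⟨w, rfl⟩ := Multiset.exists_cons_of_mem hb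
  exact ⟨a, b, w, rfl⟩

lemma make1 (hp5 : 5 ≤ p) (k : ℕ) (hk : 3 ≤ k) (m : Multiset (ZMod p))
    (hm0 : ∀ x ∈ m, x ≠ 0) (hcard : Multiset.card m = k) (z : ℕ) :
    ∃ m' : Multiset (ZMod p), (∀ x ∈ m', x ≠ 0) ∧ Multiset.card m' = k ∧
      m'.sum = m.sum ∧ (1 : ZMod p) ∈ m' ∧
      mkq s t (P (Multiset.replicate z 0 + m)) - mkq s t (P (Multiset.replicate z 0 + m'))
        ∈ Low s t (z + k) k := by
  have h1 : (1 : ZMod p) ≠ 0 := by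
    have := natCast_ne hp5 1 one_pos (by omega); simpa using this
  have h2 : (2 : ZMod p) ≠ 0 := by
    have := natCast_ne hp5 2 two_pos (by omega); simpa using this
  have h3 : (3 : ZMod p) ≠ 0 := by
    have := natCast_ne hp5 3 (by norm_num) (by omega); simpa using this
  have hneg1 : (-1 : ZMod p) ≠ 0 := neg_ne_zero.2 h1
  obtain ⟨a, b, w, rfl⟩ := exists_two m (by omega)
  have ha : a ≠ 0 := hm0 a (by simp)
  have hb : b ≠ 0 := hm0 b (by simp)
  have hcw : Multiset.card w + 2 = k := by simp [Multiset.card_cons] at hcard; omega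
  have hnzw : nz w + 2 ≤ k := by have := nz_le_card (p := p) w; omega
  by_cases hab : a + b ≠ 1
  · refine ⟨1 ::ₘ (a + b - 1) ::ₘ w, ?_, ?_, ?_, Multiset.mem_cons_self _ _, ?_⟩
    · intro x hx
      rcases Multiset.mem_cons.1 hx with rfl | hx
      · exact h1
      rcases Multiset.mem_cons.1 hx with rfl | hx
      · exact sub_ne_zero.2 hab
      · exact hm0 x (by simp [hx])
    · simp [Multiset.card_cons]; omega
    · simp only [Multiset.sum_cons]; ring
    · exact move1 s t a b 1 (a + b - 1) ha hb h1 (sub_ne_zero.2 hab) (by ring) z k w hcw hnzw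
  · push_neg at hab
    -- a + b = 1; pick a third element c
    have hw0 : w ≠ 0 := by
      rintro rfl; simp at hcw; omega
    obtain ⟨c, hc⟩ := Multiset.exists_mem_of_ne_zero hw0
    obtain ⟨w', rfl⟩ := Multiset.exists_cons_of_mem hc
    have hc0 : c ≠ 0 := hm0 c (by simp)
    have hw'0 : ∀ x ∈ w', x ≠ 0 := fun x hx => hm0 x (by simp [hx])
    have hcw' : Multiset.card w' + 2 = k - 1 := by
      simp [Multiset.card_cons] at hcw ⊢; omega
    by_cases hac : a + c ≠ 1
    · have hre : a ::ₘ b ::ₘ c ::ₘ w' = a ::ₘ c ::ₘ (b ::ₘ w') := by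
        rw [Multiset.cons_swap b c]
      refine ⟨1 ::ₘ (a + c - 1) ::ₘ (b ::ₘ w'), ?_, ?_, ?_, Multiset.mem_cons_self _ _, ?_⟩
      · intro x hx
        rcases Multiset.mem_cons.1 hx with rfl | hx
        · exact h1
        rcases Multiset.mem_cons.1 hx with rfl | hx
        · exact sub_ne_zero.2 hac
        rcases Multiset.mem_cons.1 hx with rfl | hx
        · exact hb
        · exact hw'0 x hx
      · simp [Multiset.card_cons] at hcw ⊢; omega
      · simp only [Multiset.sum_cons]; ring
      · rw [hre]
        refine move1 s t a c 1 (a + c - 1) ha hc0 h1 (sub_ne_zero.2 hac) (by ring) z k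
          (b ::ₘ w') (by simp [Multiset.card_cons] at hcw ⊢; omega) ?_
        have := nz_le_card (p := p) (b ::ₘ w')
        simp [Multiset.card_cons] at this hcw ⊢
        omega
    · push_neg at hac
      by_cases hbc : b + c ≠ 1
      · have hre : a ::ₘ b ::ₘ c ::ₘ w' = b ::ₘ c ::ₘ (a ::ₘ w') := by
          rw [Multiset.cons_swap a b, Multiset.cons_swap a c]
        refine ⟨1 ::ₘ (b + c - 1) ::ₘ (a ::ₘ w'), ?_, ?_, ?_, Multiset.mem_cons_self _ _, ?_⟩
        · intro x hx
          rcases Multiset.mem_cons.1 hx with rfl | hx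
          · exact h1
          rcases Multiset.mem_cons.1 hx with rfl | hx
          · exact sub_ne_zero.2 hbc
          rcases Multiset.mem_cons.1 hx with rfl | hx
          · exact ha
          · exact hw'0 x hx
        · simp [Multiset.card_cons] at hcw ⊢; omega
        · simp only [Multiset.sum_cons]; ring
        · rw [hre]
          refine move1 s t b c 1 (b + c - 1) hb hc0 h1 (sub_ne_zero.2 hbc) (by ring) z k
            (a ::ₘ w') (by simp [Multiset.card_cons] at hcw ⊢; omega) ?_
          have := nz_le_card (p := p) (a ::ₘ w')
          simp [Multiset.card_cons] at this hcw ⊢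
          omega
      · push_neg at hbc
        -- all pairwise sums are 1: a = b = c and 2a = 1
        have hba : b = a := by linear_combination hbc - hac
        have hca : c = a := by linear_combination hac - hab + hba
        have h2a : a + a = 1 := by rw [hba] at hab; exact hab
        have h1c : 1 + a ≠ 0 := by
          intro h
          have : a = -1 := by linear_combination h
          rw [this] at h2a
          apply h3
          linear_combination -h2a
        -- step 1 : (a, b) → (2, -1)
        have step1 := move1 s t a b 2 (-1) ha hb h2 hneg1
          (by rw [hba, h2a]; ring) z k (c ::ₘ w')
          (by simp [Multiset.card_cons] at hcw ⊢; omega)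
          (by have := nz_le_card (p := p) (c ::ₘ w')
              simp [Multiset.card_cons] at this hcw ⊢; omega)
        -- step 2 : (2, c) → (1, 1 + c)
        have hre2 : (2 : ZMod p) ::ₘ (-1) ::ₘ c ::ₘ w' = 2 ::ₘ c ::ₘ ((-1) ::ₘ w') := by
          rw [Multiset.cons_swap (-1) c]
        have step2 := move1 s t 2 c 1 (1 + c) h2 hc0 h1
          (by rw [hca]; exact h1c) (by ring) z k ((-1 : ZMod p) ::ₘ w')
          (by simp [Multiset.card_cons] at hcw ⊢; omega)
          (by have := nz_le_card (p := p) ((-1 : ZMod p) ::ₘ w')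
              simp [Multiset.card_cons] at this hcw ⊢; omega)
        refine ⟨1 ::ₘ (1 + c) ::ₘ ((-1) ::ₘ w'), ?_, ?_, ?_, Multiset.mem_cons_self _ _, ?_⟩
        · intro x hx
          rcases Multiset.mem_cons.1 hx with rfl | hx
          · exact h1
          rcases Multiset.mem_cons.1 hx with rfl | hx
          · rw [hca]; exact h1c
          rcases Multiset.mem_cons.1 hx with rfl | hx
          · exact hneg1
          · exact hw'0 x hx
        · simp [Multiset.card_cons] at hcw ⊢; omega
        · simp only [Multiset.sum_cons]
          rw [hba, hca]
          linear_combination -h2a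
        · have := Submodule.add_mem _ step1 (by rw [← hre2] at step2; exact step2)
          rw [sub_add_sub_cancel] at this
          exact this

lemma mul_low (N k : ℕ) (x : MvPolynomial (ZMod p) ℂ ⧸ relIdeal p s t)
    (hx : x ∈ Low s t N k) :
    mkq s t (X (1 : ZMod p)) * x ∈ Low s t (N + 1) (k + 1) := by
  induction hx using Submodule.span_induction with
  | mem y hy =>
      obtain ⟨m, hm1, hm2, rfl⟩ := hy
      rw [← map_mul, ← P_cons]
      apply Submodule.subset_span
      refine ⟨_, by simp [hm1], ?_, rfl⟩
      have := nz_cons_le (1 : ZMod p) m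
      omega
  | zero => rw [mul_zero]; exact Submodule.zero_mem _
  | add y z hy hz hy' hz' => rw [mul_add]; exact Submodule.add_mem _ hy' hz'
  | smul a y hy hy' => rw [mul_smul_comm]; exact Submodule.smul_mem _ _ hy'

lemma conn (hp5 : 5 ≤ p) : ∀ k, 2 ≤ k → ∀ (z : ℕ) (m₁ m₂ : Multiset (ZMod p)),
    (∀ x ∈ m₁, x ≠ 0) → (∀ x ∈ m₂, x ≠ 0) →
    Multiset.card m₁ = k → Multiset.card m₂ = k → m₁.sum = m₂.sum →
    mkq s t (P (Multiset.replicate z 0 + m₁)) - mkq s t (P (Multiset.replicate z 0 + m₂))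
      ∈ Low s t (z + k) k := by
  intro k hk2
  induction k, hk2 using Nat.le_induction with
  | base =>
      intro z m₁ m₂ h₁ h₂ hc₁ hc₂ hsum
      obtain ⟨a, b, w₁, rfl⟩ := exists_two m₁ (by omega)
      obtain ⟨c, d, w₂, rfl⟩ := exists_two m₂ (by omega)
      have hw₁ : w₁ = 0 := by
        simp only [Multiset.card_cons] at hc₁
        exact Multiset.card_eq_zero.mp (by omega)
      have hw₂ : w₂ = 0 := by
        simp only [Multiset.card_cons] at hc₂
        exact Multiset.card_eq_zero.mp (by omega)
      subst hw₁ hw₂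
      simp only [Multiset.sum_cons, Multiset.sum_zero, add_zero] at hsum
      exact move1 s t a b c d (h₁ a (by simp)) (h₁ b (by simp)) (h₂ c (by simp))
        (h₂ d (by simp)) hsum z 2 0 (by simp) (by simp [nz])
  | succ k hk ih =>
      intro z m₁ m₂ h₁ h₂ hc₁ hc₂ hsum
      obtain ⟨m₁', hm₁'nz, hm₁'c, hm₁'s, hm₁'1, hd₁⟩ :=
        make1 s t hp5 (k + 1) (by omega) m₁ h₁ hc₁ z
      obtain ⟨m₂', hm₂'nz, hm₂'c, hm₂'s, hm₂'1, hd₂⟩ :=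
        make1 s t hp5 (k + 1) (by omega) m₂ h₂ hc₂ z
      obtain ⟨u₁, rfl⟩ := Multiset.exists_cons_of_mem hm₁'1
      obtain ⟨u₂, rfl⟩ := Multiset.exists_cons_of_mem hm₂'1
      have hu₁nz : ∀ x ∈ u₁, x ≠ 0 := fun x hx => hm₁'nz x (by simp [hx])
      have hu₂nz : ∀ x ∈ u₂, x ≠ 0 := fun x hx => hm₂'nz x (by simp [hx])
      have hu₁c : Multiset.card u₁ = k := by simp only [Multiset.card_cons] at hm₁'c; omega
      have hu₂c : Multiset.card u₂ = k := by simp only [Multiset.card_cons] at hm₂'c; omega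
      have hus : u₁.sum = u₂.sum := by
        have h1 := hm₁'s; have h2 := hm₂'s
        simp only [Multiset.sum_cons] at h1 h2
        have := h1.trans (hsum.trans h2.symm)
        exact add_left_cancel this
      have hmid := mul_low s t (z + k) k _ (ih z u₁ u₂ hu₁nz hu₂nz hu₁c hu₂c hus)
      have hpadeq : ∀ u : Multiset (ZMod p),
          mkq s t (P (Multiset.replicate z 0 + (1 ::ₘ u)))
          = mkq s t (X (1 : ZMod p)) * mkq s t (P (Multiset.replicate z 0 + u)) := by
        intro u
        rw [Multiset.add_cons, P_cons, map_mul]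
      rw [mul_sub, ← hpadeq, ← hpadeq] at hmid
      have hfin := Submodule.add_mem _ (Submodule.add_mem _ hd₁ hmid)
        (Submodule.neg_mem _ hd₂)
      have heq : (mkq s t (P (Multiset.replicate z 0 + m₁)) -
            mkq s t (P (Multiset.replicate z 0 + (1 ::ₘ u₁)))) +
          (mkq s t (P (Multiset.replicate z 0 + (1 ::ₘ u₁))) -
            mkq s t (P (Multiset.replicate z 0 + (1 ::ₘ u₂)))) +
          -(mkq s t (P (Multiset.replicate z 0 + m₂)) -
            mkq s t (P (Multiset.replicate z 0 + (1 ::ₘ u₂)))) =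
          mkq s t (P (Multiset.replicate z 0 + m₁)) -
            mkq s t (P (Multiset.replicate z 0 + m₂)) := by abel
      rw [heq] at hfin
      exact hfin

/-- canonical pair of nonzero residues with sum τ -/
noncomputable def canonPair (τ : ZMod p) : Multiset (ZMod p) :=
  if τ = 0 then {1, -1} else if τ = 1 then {2, -1} else {1, τ - 1}

lemma canonPair_card (τ : ZMod p) : Multiset.card (canonPair τ) = 2 := by
  unfold canonPair; split_ifs <;> rfl

lemma canonPair_sum (τ : ZMod p) : (canonPair τ).sum = τ := by
  unfold canonPair
  split_ifs with h1 h2 <;> simp [Multiset.sum_cons] <;> first | (rw [h1]) | (rw [h2]) | ring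
  all_goals ring

lemma canonPair_nz (hp5 : 5 ≤ p) (τ : ZMod p) : ∀ x ∈ canonPair τ, x ≠ 0 := by
  have h1 : (1 : ZMod p) ≠ 0 := by
    have := natCast_ne hp5 1 one_pos (by omega); simpa using this
  have h2 : (2 : ZMod p) ≠ 0 := by
    have := natCast_ne hp5 2 two_pos (by omega); simpa using this
  have hneg1 : (-1 : ZMod p) ≠ 0 := neg_ne_zero.2 h1
  unfold canonPair
  split_ifs with hA hB
  · intro x hx
    rcases Multiset.mem_cons.1 hx with rfl | hx
    · exact h1
    · simp at hx; rw [hx]; exact hneg1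
  · intro x hx
    rcases Multiset.mem_cons.1 hx with rfl | hx
    · exact h2
    · simp at hx; rw [hx]; exact hneg1
  · intro x hx
    rcases Multiset.mem_cons.1 hx with rfl | hx
    · exact h1
    · simp at hx; rw [hx]; exact sub_ne_zero.2 hB

/-- canonical multiset with k ≥ 2 nonzero entries and sum σ -/
noncomputable def canon (k : ℕ) (σ : ZMod p) : Multiset (ZMod p) :=
  Multiset.replicate (k - 2) 1 + canonPair (σ - ((k - 2 : ℕ) : ZMod p))

lemma canon_card (k : ℕ) (hk : 2 ≤ k) (σ : ZMod p) : Multiset.card (canon k σ) = k := by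
  rw [canon, Multiset.card_add, Multiset.card_replicate, canonPair_card]
  omega

lemma canon_sum (k : ℕ) (σ : ZMod p) : (canon k σ).sum = σ := by
  rw [canon, Multiset.sum_add, Multiset.sum_replicate, canonPair_sum, nsmul_eq_mul, mul_one]
  ring

lemma canon_nz (hp5 : 5 ≤ p) (k : ℕ) (σ : ZMod p) : ∀ x ∈ canon k σ, x ≠ 0 := by
  have h1 : (1 : ZMod p) ≠ 0 := by
    have := natCast_ne hp5 1 one_pos (by omega); simpa using this
  intro x hx
  rcases Multiset.mem_add.1 hx with hx | hx
  · rw [Multiset.eq_of_mem_replicate hx]; exact h1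
  · exact canonPair_nz hp5 _ x hx

/-- canonical representative monomials: j = 0 encodes k ≤ 1, j ≥ 1 encodes k = j + 1 -/
noncomputable def canonRep (n : ℕ) (σ : ZMod p) (j : ℕ) : MvPolynomial (ZMod p) ℂ :=
  if j = 0 then P (Multiset.replicate (n - 1) 0 + {σ})
  else P (Multiset.replicate (n - (j + 1)) 0 + canon (j + 1) σ)

/-- main spanning lemma -/
lemma span_main (hp5 : 5 ≤ p) (n : ℕ) (hn : 1 ≤ n) :
    ∀ (k : ℕ) (m : Multiset (ZMod p)), Multiset.card m = n → nz m = k →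
    mkq s t (P m) ∈ Submodule.span ℂ (Set.range (fun x : ZMod p × Fin n =>
      mkq s t (canonRep n x.1 x.2))) := by
  intro k
  induction k using Nat.strong_induction_on with
  | _ k ih =>
  intro m hcard hnz
  set m₀ : Multiset (ZMod p) := m.filter (· ≠ 0) with hm₀
  have hm₀nz : ∀ x ∈ m₀, x ≠ 0 := fun x hx => (Multiset.mem_filter.1 hx).2
  have hm₀c : Multiset.card m₀ = k := hnz
  have hkn : k ≤ n := by rw [← hcard, ← hnz]; exact nz_le_card m
  have hsplit : m = Multiset.replicate (n - k) 0 + m₀ := by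
    have h1 : Multiset.filter (fun x => ¬ x ≠ 0) m = Multiset.replicate (n - k) 0 := by
      have hcf : Multiset.card (Multiset.filter (fun x => ¬ x ≠ 0) m) = n - k := by
        have h := congrArg Multiset.card (Multiset.filter_add_not (fun x : ZMod p => x ≠ 0) m)
        rw [Multiset.card_add] at h
        have h2 : Multiset.card (Multiset.filter (fun x : ZMod p => x ≠ 0) m) = k := hnz
        rw [h2, hcard] at h
        omega
      rw [← hcf]
      exact (Multiset.eq_replicate_card).2
        (fun b hb => not_not.1 (Multiset.mem_filter.1 hb).2)
    calc m = Multiset.filter (fun x => ¬ x ≠ 0) m + Multiset.filter (fun x => x ≠ 0) m := by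
            rw [add_comm]; exact (Multiset.filter_add_not _ m).symm
      _ = Multiset.replicate (n - k) 0 + m₀ := by rw [h1]
  rcases Nat.lt_or_ge k 2 with hk2 | hk2
  · -- k = 0 or 1 : already canonical
    interval_cases k
    · have hm0 : m₀ = 0 := Multiset.card_eq_zero.1 hm₀c
      have : m = Multiset.replicate (n - 1) 0 + {(0 : ZMod p)} := by
        rw [hsplit, hm0, add_zero, Nat.sub_zero]
        have : ({(0 : ZMod p)} : Multiset (ZMod p)) = Multiset.replicate 1 0 := rfl
        rw [this, ← Multiset.replicate_add]
        congr 1; omega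
      apply Submodule.subset_span
      exact ⟨(0, ⟨0, by omega⟩), by simp [canonRep, ← this]⟩
    · obtain ⟨a, ha⟩ := Multiset.card_eq_one.1 hm₀c
      apply Submodule.subset_span
      refine ⟨(a, ⟨0, by omega⟩), ?_⟩
      simp only [canonRep, ite_true]
      rw [hsplit, ha]
  · -- k ≥ 2 : move to canonical via conn
    set σ := m₀.sum with hσ
    have hconn := conn s t hp5 k hk2 (n - k) m₀ (canon k σ) hm₀nz (canon_nz hp5 k σ)
      hm₀c (canon_card k hk2 σ) (by rw [canon_sum])
    rw [Nat.sub_add_cancel hkn] at hconn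
    have hcanon_mem : mkq s t (P (Multiset.replicate (n - k) 0 + canon k σ))
        ∈ Submodule.span ℂ (Set.range (fun x : ZMod p × Fin n =>
          mkq s t (canonRep n x.1 x.2))) := by
      apply Submodule.subset_span
      refine ⟨(σ, ⟨k - 1, by omega⟩), ?_⟩
      have hkk : k - 1 + 1 = k := by omega
      simp only [canonRep, hkk, if_neg (by omega : ¬ (k - 1 = 0))]
    have hlow : Low s t n k ≤ Submodule.span ℂ (Set.range (fun x : ZMod p × Fin n =>
        mkq s t (canonRep n x.1 x.2))) := by
      rw [Low, Submodule.span_le]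
      rintro x ⟨m', hm'c, hm'nz, rfl⟩
      exact ih (nz m') hm'nz m' hm'c rfl
    have := Submodule.add_mem _ (hlow hconn) hcanon_mem
    rw [sub_add_cancel] at this
    rw [hsplit]
    exact this

lemma P_toMultiset (d : ZMod p →₀ ℕ) :
    P (Finsupp.toMultiset d) = monomial d 1 := by
  induction d using Finsupp.induction with
  | zero => simp [Finsupp.toMultiset_zero, P, monomial_zero']
  | single_add a b f ha hb ih =>
      rw [Finsupp.toMultiset_add, P_add, Finsupp.toMultiset_single, monomial_single_add, ih]
      congr 1
      rw [P, Multiset.nsmul_singleton, Multiset.map_replicate, Multiset.prod_replicate]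

lemma graded_le (hp5 : 5 ≤ p) (n : ℕ) (hn : 1 ≤ n) :
    gradedPiece p s t n ≤ Submodule.span ℂ (Set.range (fun x : ZMod p × Fin n =>
      mkq s t (canonRep n x.1 x.2))) := by
  rintro x ⟨q, hq, rfl⟩
  rw [SetLike.mem_coe, mem_homogeneousSubmodule] at hq
  have hq' : ∀ d ∈ q.support, Multiset.card (Finsupp.toMultiset d) = n := by
    intro d hd
    rw [Finsupp.card_toMultiset]
    have h := hq (MvPolynomial.mem_support_iff.1 hd)
    rw [show (1 : ZMod p → ℕ) = fun _ => 1 from rfl, ← Finsupp.degree_eq_weight_one] at h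
    exact h
  have hrepr : q = ∑ d ∈ q.support, monomial d (coeff d q) :=
    (support_sum_monomial_coeff q).symm
  show mkq s t q ∈ _
  rw [hrepr, map_sum]
  apply Submodule.sum_mem
  intro d hd
  have h1 : monomial d (coeff d q) = (coeff d q) • monomial d 1 := by
    rw [MvPolynomial.smul_monomial, smul_eq_mul, mul_one]
  rw [h1, map_smul]
  apply Submodule.smul_mem
  rw [← P_toMultiset]
  exact span_main s t hp5 n hn (nz (Finsupp.toMultiset d)) _ (hq' d hd) rfl

lemma part1 (hp : p.Prime) (hp5 : 5 ≤ p) (n : ℕ) (hn : 0 < n) :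
    Module.finrank ℂ (gradedPiece p s t n) ≤ n * p := by
  haveI : Fact p.Prime := ⟨hp⟩
  haveI : NeZero p := ⟨hp.pos.ne'⟩
  classical
  set f : ZMod p × Fin n → (MvPolynomial (ZMod p) ℂ ⧸ relIdeal p s t) :=
    fun x => mkq s t (canonRep n x.1 x.2) with hf
  set F : Finset (MvPolynomial (ZMod p) ℂ ⧸ relIdeal p s t) :=
    Finset.image f Finset.univ with hF
  have hrange : Set.range f = (F : Set (MvPolynomial (ZMod p) ℂ ⧸ relIdeal p s t)) := by
    simp [hF]
  have hle : gradedPiece p s t n ≤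
      Submodule.span ℂ (F : Set (MvPolynomial (ZMod p) ℂ ⧸ relIdeal p s t)) := by
    rw [← hrange]; exact graded_le s t hp5 n hn
  haveI := FiniteDimensional.span_finset ℂ F
  have h1 : Module.finrank ℂ (gradedPiece p s t n) ≤ Module.finrank ℂ
      (Submodule.span ℂ (F : Set (MvPolynomial (ZMod p) ℂ ⧸ relIdeal p s t))) :=
    Submodule.finrank_mono hle
  have h2 : Module.finrank ℂ
      (Submodule.span ℂ (F : Set (MvPolynomial (ZMod p) ℂ ⧸ relIdeal p s t))) ≤ F.card :=
    finrank_span_finset_le_card _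
  have h3 : F.card ≤ n * p := by
    calc F.card ≤ Fintype.card (ZMod p × Fin n) :=
          (Finset.card_image_le).trans (by simp)
      _ = n * p := by rw [Fintype.card_prod, ZMod.card, Fintype.card_fin, mul_comm]
  omega

lemma one_ne_zero_q :
    (1 : MvPolynomial (ZMod p) ℂ ⧸ relIdeal p s t) ≠ 0 := by
  intro h
  have h1 : (1 : MvPolynomial (ZMod p) ℂ) ∈ relIdeal p s t := by
    rw [← Ideal.Quotient.eq_zero_iff_mem, map_one]
    exact h
  have hker : relIdeal p s t ≤ RingHom.ker (eval (fun _ : ZMod p => (0 : ℂ))) := by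
    rw [relIdeal, Ideal.span_le]
    rintro q (⟨a, b, c, d, _, _, _, _, _, _, rfl⟩ | ⟨a, b, _, _, rfl⟩) <;>
      simp [RingHom.mem_ker]
  have := hker h1
  simp [RingHom.mem_ker] at this

lemma part2 : Module.finrank ℂ (gradedPiece p s t 0) = 1 := by
  have hgp : gradedPiece p s t 0 = Submodule.span ℂ
      {(1 : MvPolynomial (ZMod p) ℂ ⧸ relIdeal p s t)} := by
    apply le_antisymm
    · rintro x ⟨q, hq, rfl⟩
      rw [SetLike.mem_coe, mem_homogeneousSubmodule] at hq
      have hdeg : q.totalDegree = 0 := (totalDegree_zero_iff_isHomogeneous _).mpr hq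
      rw [totalDegree_eq_zero_iff] at hdeg
      have hqC : q = C (coeff 0 q) := by
        apply MvPolynomial.ext
        intro d
        rw [coeff_C]
        by_cases hd : d = 0
        · rw [hd, if_pos rfl]
        · rw [if_neg (fun h => hd h.symm)]
          by_contra hne
          exact hd (Finsupp.ext (hdeg d (MvPolynomial.mem_support_iff.2 hne)))
      have hx : (Ideal.Quotient.mkₐ ℂ (relIdeal p s t)).toLinearMap q
          = (coeff 0 q) • (1 : MvPolynomial (ZMod p) ℂ ⧸ relIdeal p s t) := by
        show mkq s t q = _
        conv_lhs => rw [hqC]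
        rw [← mul_one (C (coeff 0 q)), mkq_C_mul, map_one]
      rw [hx]
      exact Submodule.smul_mem _ _ (Submodule.mem_span_singleton_self 1)
    · rw [Submodule.span_le, Set.singleton_subset_iff]
      refine ⟨1, ?_, show mkq s t 1 = 1 from map_one _⟩
      exact (mem_homogeneousSubmodule _ _).2 (isHomogeneous_one (ZMod p) ℂ)
  rw [hgp]
  exact finrank_span_singleton (one_ne_zero_q s t)

end St11X

/-- For arbitrary s, t, the degree-n graded component of the quotient ring
has ℂ-dimension at most np for n > 0, and the degree-0 component has dimension 1. -/
theorem statement11 (p : ℕ) (hp : p.Prime) (hp5 : 5 ≤ p)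
    (s t : ZMod p → ℂ) :
    (∀ n : ℕ, 0 < n → Module.finrank ℂ (gradedPiece p s t n) ≤ n * p) ∧
    Module.finrank ℂ (gradedPiece p s t 0) = 1 :=
  ⟨fun n hn => St11X.part1 s t hp hp5 n hn, St11X.part2 s t⟩
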